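/- Let L(n) = lcm_{mn < i ≤ ln} {f(i)} and let P(n) be the set of prime factors of L(n) that do not divide lcm(a₁b₂ − a₂b₁, q). Then log L(n) = Σ_{p ∈ P(n)} log p + O(√n) as n → ∞. -/

import Mathlib

open Filter Asymptotics

/-- `L(n) = lcm_{mn < i ≤ ln} f(i)` with `f(i) = (a₁ i + b₁)(a₂ i + b₂)`. -/
def Lfn (l m a₁ a₂ b₁ b₂ n : ℕ) : ℕ :=
  (Finset.Ioc (m * n) (l * n)).lcm (fun i => (a₁ * i + b₁) * (a₂ * i + b₂))

/-- `P(n)`: the prime factors of `L(n)` not dividing `lcm(a₁b₂ − a₂b₁, q)`. -/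
def Pfact (l m a₁ a₂ b₁ b₂ q n : ℕ) : Set ℕ :=
  {p : ℕ | p.Prime ∧ p ∣ Lfn l m a₁ a₂ b₁ b₂ n ∧
    ¬ p ∣ Nat.lcm (Int.natAbs ((a₁ : ℤ) * b₂ - (a₂ : ℤ) * b₁)) q}


lemma pow_prime_dvd_lcm {p k x y : ℕ} (hp : p.Prime) (hx : x ≠ 0) (hy : y ≠ 0)
    (h : p ^ k ∣ Nat.lcm x y) : p ^ k ∣ x ∨ p ^ k ∣ y := by
  rw [Nat.Prime.pow_dvd_iff_le_factorization hp (Nat.lcm_ne_zero hx hy),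
    Nat.factorization_lcm hx hy, Finsupp.sup_apply, le_sup_iff] at h
  rcases h with h | h
  · exact Or.inl ((Nat.Prime.pow_dvd_iff_le_factorization hp hx).2 h)
  · exact Or.inr ((Nat.Prime.pow_dvd_iff_le_factorization hp hy).2 h)

lemma pow_prime_dvd_finset_lcm {ι : Type*} [DecidableEq ι] {s : Finset ι} {f : ι → ℕ}
    (hf : ∀ i ∈ s, f i ≠ 0) {p k : ℕ} (hp : p.Prime) (hk : 0 < k)
    (h : p ^ k ∣ s.lcm f) : ∃ i ∈ s, p ^ k ∣ f i := by
  induction s using Finset.induction with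
  | empty =>
      simp only [Finset.lcm_empty, Nat.dvd_one] at h
      exact absurd h (Nat.one_lt_pow hk.ne' hp.one_lt).ne'
  | @insert a s ha ih =>
      rw [Finset.lcm_insert] at h
      have hs : s.lcm f ≠ 0 := by
        rw [Ne, Finset.lcm_eq_zero_iff]
        rintro ⟨i, hi, h0⟩
        exact hf i (Finset.mem_insert_of_mem hi) h0
      have h' : p ^ k ∣ Nat.lcm (f a) (s.lcm f) := h
      rcases pow_prime_dvd_lcm hp (hf a (Finset.mem_insert_self a s)) hs h' with h1 | h1
      · exact ⟨a, Finset.mem_insert_self a s, h1⟩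
      · obtain ⟨i, hi, hd⟩ := ih (fun i hi => hf i (Finset.mem_insert_of_mem hi)) h1
        exact ⟨i, Finset.mem_insert_of_mem hi, hd⟩

section core
variable {l m a₁ a₂ b₁ b₂ n : ℕ}

lemma f_pos (hb₁ : 0 < b₁) (hb₂ : 0 < b₂) (i : ℕ) : 0 < (a₁ * i + b₁) * (a₂ * i + b₂) :=
  Nat.mul_pos (by omega) (by omega)

lemma Lfn_ne_zero (hb₁ : 0 < b₁) (hb₂ : 0 < b₂) : Lfn l m a₁ a₂ b₁ b₂ n ≠ 0 := by
  rw [Lfn, Ne, Finset.lcm_eq_zero_iff]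
  rintro ⟨i, hi, h0⟩
  exact absurd h0 (f_pos hb₁ hb₂ i).ne'

lemma exists_pow_dvd (hb₁ : 0 < b₁) (hb₂ : 0 < b₂) {p k : ℕ} (hp : p.Prime) (hk : 0 < k)
    (h : p ^ k ∣ Lfn l m a₁ a₂ b₁ b₂ n) :
    ∃ i ∈ Finset.Ioc (m * n) (l * n), p ^ k ∣ (a₁ * i + b₁) * (a₂ * i + b₂) :=
  pow_prime_dvd_finset_lcm (fun i _ => (f_pos hb₁ hb₂ i).ne') hp hk h

-- crude bound: for any prime factor p of L, p ^ v_p(L) ≤ (a₁*(l*n)+b₁)*(a₂*(l*n)+b₂)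
lemma pow_factorization_le_crude (hb₁ : 0 < b₁) (hb₂ : 0 < b₂) {p : ℕ} (hp : p.Prime)
    (hdvd : p ∣ Lfn l m a₁ a₂ b₁ b₂ n) :
    p ^ ((Lfn l m a₁ a₂ b₁ b₂ n).factorization p) ≤ (a₁*(l*n)+b₁) * (a₂*(l*n)+b₂) := by
  have hL := Lfn_ne_zero (l := l) (m := m) (a₁ := a₁) (a₂ := a₂) (n := n) hb₁ hb₂
  have hk : 0 < (Lfn l m a₁ a₂ b₁ b₂ n).factorization p :=
    Nat.Prime.factorization_pos_of_dvd hp hL hdvd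
  obtain ⟨i, hi, hd⟩ := exists_pow_dvd hb₁ hb₂ hp hk (Nat.ordProj_dvd _ p)
  refine (Nat.le_of_dvd (f_pos hb₁ hb₂ i) hd).trans ?_
  have hi' : i ≤ l * n := (Finset.mem_Ioc.1 hi).2
  exact Nat.mul_le_mul (by nlinarith) (by nlinarith)

-- key bound: if p ∤ D then p ^ v_p(L) ≤ max of the single factors
lemma pow_factorization_le_key (hb₁ : 0 < b₁) (hb₂ : 0 < b₂) {p D : ℕ}
    (hDdvd : Int.natAbs ((a₁:ℤ)*b₂ - (a₂:ℤ)*b₁) ∣ D) (hp : p.Prime)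
    (hdvd : p ∣ Lfn l m a₁ a₂ b₁ b₂ n) (hnd : ¬ p ∣ D) :
    p ^ ((Lfn l m a₁ a₂ b₁ b₂ n).factorization p) ≤ max (a₁*(l*n)+b₁) (a₂*(l*n)+b₂) := by
  have hL := Lfn_ne_zero (l := l) (m := m) (a₁ := a₁) (a₂ := a₂) (n := n) hb₁ hb₂
  have hk : 0 < (Lfn l m a₁ a₂ b₁ b₂ n).factorization p :=
    Nat.Prime.factorization_pos_of_dvd hp hL hdvd
  set k := (Lfn l m a₁ a₂ b₁ b₂ n).factorization p with hkdef
  obtain ⟨i, hi, hd⟩ := exists_pow_dvd hb₁ hb₂ hp hk (Nat.ordProj_dvd _ p)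
  have hi' : i ≤ l * n := (Finset.mem_Ioc.1 hi).2
  -- p cannot divide both factors
  have hnotboth : ¬ (p ∣ (a₁ * i + b₁) ∧ p ∣ (a₂ * i + b₂)) := by
    rintro ⟨h1, h2⟩
    apply hnd
    apply dvd_trans _ hDdvd
    rw [← Int.natCast_dvd_natCast] at h1 h2 ⊢
    rw [Int.natCast_natAbs]
    rw [dvd_abs]
    have : (a₂:ℤ) * (a₁ * i + b₁) - (a₁:ℤ) * (a₂ * i + b₂) = -((a₁:ℤ)*b₂ - (a₂:ℤ)*b₁) := by
      push_cast; ring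
    have hd2 : (p:ℤ) ∣ (a₂:ℤ) * (a₁ * i + b₁) - (a₁:ℤ) * (a₂ * i + b₂) :=
      dvd_sub (Dvd.dvd.mul_left (by exact_mod_cast h1) _) (Dvd.dvd.mul_left (by exact_mod_cast h2) _)
    rw [this, dvd_neg] at hd2
    exact hd2
  rcases not_and_or.1 hnotboth with h1 | h2
  · -- p ∤ first factor, so p^k ∣ second factor
    have hcop : Nat.Coprime (p ^ k) (a₁ * i + b₁) :=
      Nat.Coprime.pow_left _ ((Nat.Prime.coprime_iff_not_dvd hp).2 h1)
    have : p ^ k ∣ (a₂ * i + b₂) := hcop.dvd_of_dvd_mul_left hd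
    exact le_max_of_le_right ((Nat.le_of_dvd (by omega) this).trans (by nlinarith))
  · have hcop : Nat.Coprime (p ^ k) (a₂ * i + b₂) :=
      Nat.Coprime.pow_left _ ((Nat.Prime.coprime_iff_not_dvd hp).2 h2)
    have : p ^ k ∣ (a₁ * i + b₁) := hcop.dvd_of_dvd_mul_right hd
    exact le_max_of_le_left ((Nat.le_of_dvd (by omega) this).trans (by nlinarith))

end core

-- log L as a sum over prime factors
lemma log_Lfn_eq {l m a₁ a₂ b₁ b₂ n : ℕ} (hb₁ : 0 < b₁) (hb₂ : 0 < b₂) :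
    Real.log (Lfn l m a₁ a₂ b₁ b₂ n) =
      ∑ p ∈ (Lfn l m a₁ a₂ b₁ b₂ n).primeFactors,
        ((Lfn l m a₁ a₂ b₁ b₂ n).factorization p : ℝ) * Real.log p := by
  set L := Lfn l m a₁ a₂ b₁ b₂ n with hLdef
  have hL0 : L ≠ 0 := Lfn_ne_zero hb₁ hb₂
  conv_lhs => rw [← Nat.factorization_prod_pow_eq_self hL0]
  rw [Finsupp.prod, Nat.support_factorization, Nat.cast_prod, Real.log_prod]
  · exact Finset.sum_congr rfl fun p hp => by rw [Nat.cast_pow, Real.log_pow]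
  · intro p hp
    have := (Nat.prime_of_mem_primeFactors hp).pos
    positivity

lemma diff_eq {l m a₁ a₂ b₁ b₂ n D : ℕ} (hb₁ : 0 < b₁) (hb₂ : 0 < b₂) :
    Real.log (Lfn l m a₁ a₂ b₁ b₂ n)
      - ∑ p ∈ (Lfn l m a₁ a₂ b₁ b₂ n).primeFactors.filter (fun p => ¬ p ∣ D), Real.log p
    = (∑ p ∈ (Lfn l m a₁ a₂ b₁ b₂ n).primeFactors.filter (fun p => p ∣ D),
        ((Lfn l m a₁ a₂ b₁ b₂ n).factorization p : ℝ) * Real.log p)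
      + ∑ p ∈ (Lfn l m a₁ a₂ b₁ b₂ n).primeFactors.filter (fun p => ¬ p ∣ D),
          (((Lfn l m a₁ a₂ b₁ b₂ n).factorization p : ℝ) - 1) * Real.log p := by
  rw [log_Lfn_eq hb₁ hb₂,
    ← Finset.sum_filter_add_sum_filter_not (Lfn l m a₁ a₂ b₁ b₂ n).primeFactors
      (fun p => p ∣ D) (fun p => ((Lfn l m a₁ a₂ b₁ b₂ n).factorization p : ℝ) * Real.log p)]
  rw [add_sub_assoc, ← Finset.sum_sub_distrib]
  congr 1
  exact Finset.sum_congr rfl fun p hp => by ring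

lemma QF_bound {l m a₁ a₂ b₁ b₂ n D : ℕ} (hb₁ : 0 < b₁) (hb₂ : 0 < b₂) (hD : D ≠ 0) :
    ∑ p ∈ (Lfn l m a₁ a₂ b₁ b₂ n).primeFactors.filter (fun p => p ∣ D),
        ((Lfn l m a₁ a₂ b₁ b₂ n).factorization p : ℝ) * Real.log p
    ≤ (D.primeFactors.card : ℝ) * (2 * Real.log ((((a₁+a₂)*l*n + (b₁+b₂) : ℕ)) : ℝ)) := by
  set L := Lfn l m a₁ a₂ b₁ b₂ n with hLdef
  set M : ℕ := (a₁+a₂)*l*n + (b₁+b₂) with hMdef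
  have hM1 : 1 ≤ M := by omega
  have hlogM : (0:ℝ) ≤ Real.log M := Real.log_natCast_nonneg M
  have hterm : ∀ p ∈ L.primeFactors.filter (fun p => p ∣ D),
      ((L.factorization p : ℝ)) * Real.log p ≤ 2 * Real.log M := by
    intro p hp
    rw [Finset.mem_filter] at hp
    have hpp := Nat.prime_of_mem_primeFactors hp.1
    have hpd := Nat.dvd_of_mem_primeFactors hp.1
    have hb : p ^ (L.factorization p) ≤ M * M := by
      refine (pow_factorization_le_crude hb₁ hb₂ hpp hpd).trans ?_
      have h1 : a₁*(l*n)+b₁ ≤ M := by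
        simp only [hMdef, mul_assoc]
        exact Nat.add_le_add (Nat.mul_le_mul_right _ (Nat.le_add_right _ _)) (Nat.le_add_right _ _)
      have h2 : a₂*(l*n)+b₂ ≤ M := by
        simp only [hMdef, mul_assoc]
        exact Nat.add_le_add (Nat.mul_le_mul_right _ (Nat.le_add_left _ _)) (Nat.le_add_left _ _)
      exact Nat.mul_le_mul h1 h2
    calc ((L.factorization p : ℝ)) * Real.log p = Real.log ((p : ℝ) ^ L.factorization p) := by
          rw [Real.log_pow]
      _ ≤ Real.log ((M : ℝ) * M) := by
          rw [← Nat.cast_pow]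
          apply Real.log_le_log (by exact_mod_cast pow_pos hpp.pos (L.factorization p))
          exact_mod_cast hb
      _ = 2 * Real.log M := by
          have hM0 : (M:ℝ) ≠ 0 := by exact_mod_cast (by omega : M ≠ 0)
          rw [Real.log_mul hM0 hM0]; ring
  calc ∑ p ∈ L.primeFactors.filter (fun p => p ∣ D), ((L.factorization p : ℝ)) * Real.log p
      ≤ (L.primeFactors.filter (fun p => p ∣ D)).card • (2 * Real.log M) :=
        Finset.sum_le_card_nsmul _ _ _ hterm
    _ = ((L.primeFactors.filter (fun p => p ∣ D)).card : ℝ) * (2 * Real.log M) := by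
        rw [nsmul_eq_mul]
    _ ≤ (D.primeFactors.card : ℝ) * (2 * Real.log M) := by
        apply mul_le_mul_of_nonneg_right _ (by linarith [hlogM])
        have hsub : L.primeFactors.filter (fun p => p ∣ D) ⊆ D.primeFactors := by
          intro p hp
          rw [Finset.mem_filter] at hp
          exact Nat.mem_primeFactors.2 ⟨Nat.prime_of_mem_primeFactors hp.1, hp.2, hD⟩
        exact_mod_cast Nat.cast_le.2 (Finset.card_le_card hsub)

lemma PF_bound {l m a₁ a₂ b₁ b₂ n D : ℕ} (hb₁ : 0 < b₁) (hb₂ : 0 < b₂)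
    (hDdvd : Int.natAbs ((a₁:ℤ)*b₂ - (a₂:ℤ)*b₁) ∣ D) :
    ∑ p ∈ (Lfn l m a₁ a₂ b₁ b₂ n).primeFactors.filter (fun p => ¬ p ∣ D),
        (((Lfn l m a₁ a₂ b₁ b₂ n).factorization p : ℝ) - 1) * Real.log p
    ≤ ((Nat.sqrt (Nat.sqrt ((a₁+a₂)*l*n + (b₁+b₂))) : ℝ) + 1)
        * Real.log ((((a₁+a₂)*l*n + (b₁+b₂) : ℕ)) : ℝ)
      + 4 * ((Nat.sqrt ((a₁+a₂)*l*n + (b₁+b₂)) : ℝ) * Real.log 4) := by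
  set L := Lfn l m a₁ a₂ b₁ b₂ n with hLdef
  have hL0 : L ≠ 0 := Lfn_ne_zero hb₁ hb₂
  set M : ℕ := (a₁+a₂)*l*n + (b₁+b₂) with hMdef
  set x : ℕ := Nat.sqrt M with hxdef
  set y : ℕ := Nat.sqrt x with hydef
  have hM1 : 1 ≤ M := by omega
  have hlogM : (0:ℝ) ≤ Real.log M := Real.log_natCast_nonneg M
  set PF := L.primeFactors.filter (fun p => ¬ p ∣ D) with hPFdef
  set PF2 := PF.filter (fun p => 2 ≤ L.factorization p) with hPF2def
  set Px := (Finset.range (x+1)).filter (fun p => p.Prime) with hPxdef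
  -- the key divisibility bound, specialized
  have keyM : ∀ p ∈ PF, p ^ (L.factorization p) ≤ M := by
    intro p hp
    rw [hPFdef, Finset.mem_filter] at hp
    have hpp := Nat.prime_of_mem_primeFactors hp.1
    refine (pow_factorization_le_key hb₁ hb₂ hDdvd hpp (Nat.dvd_of_mem_primeFactors hp.1) hp.2).trans ?_
    have h1 : a₁*(l*n)+b₁ ≤ M := by
      simp only [hMdef, mul_assoc]
      exact Nat.add_le_add (Nat.mul_le_mul_right _ (Nat.le_add_right _ _)) (Nat.le_add_right _ _)
    have h2 : a₂*(l*n)+b₂ ≤ M := by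
      simp only [hMdef, mul_assoc]
      exact Nat.add_le_add (Nat.mul_le_mul_right _ (Nat.le_add_left _ _)) (Nat.le_add_left _ _)
    exact max_le h1 h2
  have hprime_log_nonneg : ∀ p : ℕ, p.Prime → (0:ℝ) ≤ Real.log p := fun p hp =>
    Real.log_nonneg (by exact_mod_cast hp.one_lt.le)
  -- step 1
  have step1 : ∑ p ∈ PF, ((L.factorization p : ℝ) - 1) * Real.log p
      = ∑ p ∈ PF2, ((L.factorization p : ℝ) - 1) * Real.log p := by
    refine (Finset.sum_subset (Finset.filter_subset _ _) ?_).symm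
    intro p hp hnp
    have hp' := hp
    rw [hPFdef, Finset.mem_filter] at hp'
    have hv1 : 1 ≤ L.factorization p :=
      (Nat.prime_of_mem_primeFactors hp'.1).factorization_pos_of_dvd hL0
        (Nat.dvd_of_mem_primeFactors hp'.1)
    have hv2 : ¬ 2 ≤ L.factorization p := fun h => hnp (Finset.mem_filter.2 ⟨hp, h⟩)
    have : L.factorization p = 1 := by omega
    rw [this]; simp
  -- step 2
  have step2 : ∑ p ∈ PF2, ((L.factorization p : ℝ) - 1) * Real.log p
      ≤ ∑ p ∈ PF2, (Real.log M - Real.log p) := by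
    refine Finset.sum_le_sum fun p hp => ?_
    have hpPF : p ∈ PF := Finset.filter_subset _ _ hp
    have hp' := hpPF
    rw [hPFdef, Finset.mem_filter] at hp'
    have hpp := Nat.prime_of_mem_primeFactors hp'.1
    have hlogp := hprime_log_nonneg p hpp
    have hvlog : (L.factorization p : ℝ) * Real.log p ≤ Real.log M := by
      rw [← Real.log_pow, ← Nat.cast_pow]
      exact Real.log_le_log (by exact_mod_cast pow_pos hpp.pos _) (by exact_mod_cast keyM p hpPF)
    nlinarith
  -- step 3
  have step3 : ∑ p ∈ PF2, (Real.log M - Real.log p)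
      ≤ ∑ p ∈ Px, (Real.log M - Real.log p) := by
    refine Finset.sum_le_sum_of_subset_of_nonneg ?_ ?_
    · intro p hp
      rw [hPF2def, Finset.mem_filter] at hp
      obtain ⟨hpPF, hv2⟩ := hp
      have hp' := hpPF
      rw [hPFdef, Finset.mem_filter] at hp'
      have hpp := Nat.prime_of_mem_primeFactors hp'.1
      have hsq : p ^ 2 ≤ M :=
        (Nat.pow_le_pow_right hpp.pos hv2).trans (keyM p hpPF)
      rw [hPxdef, Finset.mem_filter, Finset.mem_range]
      exact ⟨Nat.lt_succ_of_le (Nat.le_sqrt'.2 hsq), hpp⟩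
    · intro p hp _
      rw [hPxdef, Finset.mem_filter, Finset.mem_range] at hp
      have : p ≤ M := le_trans (Nat.lt_succ_iff.1 hp.1) (Nat.sqrt_le_self M)
      have : Real.log p ≤ Real.log M :=
        Real.log_le_log (by exact_mod_cast hp.2.pos) (by exact_mod_cast this)
      linarith
  -- step 4/5/6
  have step4 : ∑ p ∈ Px, (Real.log M - Real.log p)
      = ∑ p ∈ Px.filter (fun p => p ≤ y), (Real.log M - Real.log p)
        + ∑ p ∈ Px.filter (fun p => ¬ p ≤ y), (Real.log M - Real.log p) :=
    (Finset.sum_filter_add_sum_filter_not Px (fun p => p ≤ y) _).symm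
  have step5 : ∑ p ∈ Px.filter (fun p => p ≤ y), (Real.log M - Real.log p)
      ≤ ((y:ℝ) + 1) * Real.log M := by
    have hcard : (Px.filter (fun p => p ≤ y)).card ≤ y + 1 := by
      have : Px.filter (fun p => p ≤ y) ⊆ Finset.range (y+1) := by
        intro p hp
        rw [Finset.mem_filter] at hp
        exact Finset.mem_range.2 (Nat.lt_succ_of_le hp.2)
      simpa using Finset.card_le_card this
    calc ∑ p ∈ Px.filter (fun p => p ≤ y), (Real.log M - Real.log p)
        ≤ (Px.filter (fun p => p ≤ y)).card • Real.log M := by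
          refine Finset.sum_le_card_nsmul _ _ _ fun p hp => ?_
          rw [Finset.mem_filter, hPxdef, Finset.mem_filter] at hp
          have := hprime_log_nonneg p hp.1.2
          linarith
      _ = ((Px.filter (fun p => p ≤ y)).card : ℝ) * Real.log M := nsmul_eq_mul _ _
      _ ≤ ((y:ℝ) + 1) * Real.log M := by
          apply mul_le_mul_of_nonneg_right _ hlogM
          exact_mod_cast Nat.cast_le.2 hcard
  have step6 : ∑ p ∈ Px.filter (fun p => ¬ p ≤ y), (Real.log M - Real.log p)
      ≤ 4 * ((x:ℝ) * Real.log 4) := by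
    have hM4 : M < (y+1)^4 := by
      have h1 : M < (x+1)^2 := Nat.lt_succ_sqrt' M
      have h2 : x < (y+1)^2 := Nat.lt_succ_sqrt' x
      calc M < (x+1)^2 := h1
        _ ≤ ((y+1)^2)^2 := Nat.pow_le_pow_left (by omega) 2
        _ = (y+1)^4 := by ring
    have hterm : ∀ p ∈ Px.filter (fun p => ¬ p ≤ y),
        Real.log M - Real.log p ≤ 4 * Real.log p := by
      intro p hp
      rw [Finset.mem_filter, hPxdef, Finset.mem_filter] at hp
      obtain ⟨⟨_, hpp⟩, hpy⟩ := hp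
      have hyp : y + 1 ≤ p := by omega
      have hlogp := hprime_log_nonneg p hpp
      have : Real.log M ≤ 4 * Real.log p := by
        rw [show (4:ℝ) * Real.log p = Real.log ((p:ℝ)^4) by rw [Real.log_pow]; norm_num]
        apply Real.log_le_log (by exact_mod_cast hM1)
        calc (M:ℝ) ≤ ((y+1:ℕ):ℝ)^4 := by exact_mod_cast hM4.le
          _ ≤ (p:ℝ)^4 := by
              apply pow_le_pow_left₀ (by positivity)
              exact_mod_cast hyp
      linarith
    calc ∑ p ∈ Px.filter (fun p => ¬ p ≤ y), (Real.log M - Real.log p)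
        ≤ ∑ p ∈ Px.filter (fun p => ¬ p ≤ y), 4 * Real.log p :=
          Finset.sum_le_sum hterm
      _ ≤ ∑ p ∈ Px, 4 * Real.log p := by
          refine Finset.sum_le_sum_of_subset_of_nonneg (Finset.filter_subset _ _) ?_
          intro p hp _
          rw [hPxdef, Finset.mem_filter] at hp
          have := hprime_log_nonneg p hp.2
          linarith
      _ = 4 * ∑ p ∈ Px, Real.log p := by rw [Finset.mul_sum]
      _ ≤ 4 * ((x:ℝ) * Real.log 4) := by
          apply mul_le_mul_of_nonneg_left _ (by norm_num)
          have hprod : ∑ p ∈ Px, Real.log p = Real.log (primorial x) := by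
            rw [primorial, Nat.cast_prod, Real.log_prod (fun p hp => by
              rw [Finset.mem_filter] at hp
              exact_mod_cast hp.2.pos.ne')]
          rw [hprod]
          have hpos : (0:ℝ) < ((primorial x : ℕ) : ℝ) := by
            have : 0 < primorial x :=
              Finset.prod_pos fun p hp => (Finset.mem_filter.1 hp).2.pos
            exact_mod_cast this
          calc Real.log (primorial x) ≤ Real.log (((4:ℕ)^x : ℕ) : ℝ) :=
                Real.log_le_log hpos (by exact_mod_cast primorial_le_4_pow x)
            _ = (x:ℝ) * Real.log 4 := by
                push_cast
                rw [Real.log_pow]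
  calc ∑ p ∈ PF, ((L.factorization p : ℝ) - 1) * Real.log p
      = ∑ p ∈ PF2, ((L.factorization p : ℝ) - 1) * Real.log p := step1
    _ ≤ ∑ p ∈ PF2, (Real.log M - Real.log p) := step2
    _ ≤ ∑ p ∈ Px, (Real.log M - Real.log p) := step3
    _ = _ + _ := step4
    _ ≤ ((y:ℝ) + 1) * Real.log M + 4 * ((x:ℝ) * Real.log 4) := add_le_add step5 step6

lemma diff_nonneg' {l m a₁ a₂ b₁ b₂ n D : ℕ} (hb₁ : 0 < b₁) (hb₂ : 0 < b₂) :
    0 ≤ Real.log (Lfn l m a₁ a₂ b₁ b₂ n)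
      - ∑ p ∈ (Lfn l m a₁ a₂ b₁ b₂ n).primeFactors.filter (fun p => ¬ p ∣ D), Real.log p := by
  rw [diff_eq hb₁ hb₂]
  have hL0 : Lfn l m a₁ a₂ b₁ b₂ n ≠ 0 := Lfn_ne_zero hb₁ hb₂
  have key : ∀ p ∈ (Lfn l m a₁ a₂ b₁ b₂ n).primeFactors,
      (0:ℝ) ≤ Real.log p ∧ 1 ≤ ((Lfn l m a₁ a₂ b₁ b₂ n).factorization p : ℝ) := by
    intro p hp
    have hpp := Nat.prime_of_mem_primeFactors hp
    constructor
    · exact Real.log_nonneg (by exact_mod_cast hpp.one_lt.le)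
    · exact_mod_cast hpp.factorization_pos_of_dvd hL0 (Nat.dvd_of_mem_primeFactors hp)
  apply add_nonneg
  · refine Finset.sum_nonneg fun p hp => ?_
    obtain ⟨h1, h2⟩ := key p (Finset.filter_subset _ _ hp)
    nlinarith
  · refine Finset.sum_nonneg fun p hp => ?_
    obtain ⟨h1, h2⟩ := key p (Finset.filter_subset _ _ hp)
    nlinarith

lemma diff_le_sqrt {l m a₁ a₂ b₁ b₂ n D : ℕ} (hb₁ : 0 < b₁) (hb₂ : 0 < b₂)
    (hDdvd : Int.natAbs ((a₁:ℤ)*b₂ - (a₂:ℤ)*b₁) ∣ D) (hD : D ≠ 0) :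
    Real.log (Lfn l m a₁ a₂ b₁ b₂ n)
      - ∑ p ∈ (Lfn l m a₁ a₂ b₁ b₂ n).primeFactors.filter (fun p => ¬ p ∣ D), Real.log p
    ≤ (8 * (D.primeFactors.card : ℝ) + 8 + 4 * Real.log 4)
        * Real.sqrt ((((a₁+a₂)*l*n + (b₁+b₂) : ℕ)) : ℝ) := by
  have hQ := QF_bound (l := l) (m := m) (n := n) (a₁ := a₁) (a₂ := a₂) hb₁ hb₂ hD
  have hP := PF_bound (l := l) (m := m) (n := n) hb₁ hb₂ hDdvd
  rw [diff_eq hb₁ hb₂]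
  set M : ℕ := (a₁+a₂)*l*n + (b₁+b₂) with hMdef
  set x : ℕ := Nat.sqrt M with hxdef
  set y : ℕ := Nat.sqrt x with hydef
  set ω : ℝ := (D.primeFactors.card : ℝ) with hwdef
  have hM1 : 1 ≤ M := by omega
  have hM1R : (1:ℝ) ≤ (M:ℝ) := by exact_mod_cast hM1
  have h0 : (0:ℝ) ≤ (M:ℝ) := by linarith
  set sM : ℝ := Real.sqrt (M:ℝ) with hsMdef
  set sS : ℝ := Real.sqrt sM with hsSdef
  have hsM0 : 0 ≤ sM := Real.sqrt_nonneg _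
  have hsS0 : 0 ≤ sS := Real.sqrt_nonneg _
  have hmm : sM * sM = (M:ℝ) := Real.mul_self_sqrt h0
  have hss : sS * sS = sM := Real.mul_self_sqrt hsM0
  have hsM1 : 1 ≤ sM := by nlinarith
  have hsS1 : 1 ≤ sS := by nlinarith
  have hsSle : sS ≤ sM := by nlinarith
  have hlogsS : Real.log (M:ℝ) = 4 * Real.log sS := by
    rw [hsSdef, hsMdef, Real.log_sqrt hsM0, Real.log_sqrt h0]; ring
  have hlog : Real.log (M:ℝ) ≤ 4 * sS := by
    have := Real.log_le_sub_one_of_pos (lt_of_lt_of_le one_pos hsS1)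
    linarith [hlogsS]
  have hlogM0 : 0 ≤ Real.log (M:ℝ) := Real.log_nonneg hM1R
  have hy : (y:ℝ) ≤ sS := by
    calc (y:ℝ) ≤ Real.sqrt (x:ℝ) := Real.nat_sqrt_le_real_sqrt
      _ ≤ Real.sqrt sM := Real.sqrt_le_sqrt Real.nat_sqrt_le_real_sqrt
      _ = sS := rfl
  have hx : (x:ℝ) ≤ sM := Real.nat_sqrt_le_real_sqrt
  have hlog4 : (0:ℝ) ≤ Real.log 4 := Real.log_nonneg (by norm_num)
  have hω0 : (0:ℝ) ≤ ω := Nat.cast_nonneg _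
  have t1 : ω * (2 * Real.log (M:ℝ)) ≤ 8 * ω * sM := by nlinarith
  have t2 : ((y:ℝ) + 1) * Real.log (M:ℝ) ≤ 8 * sM := by nlinarith
  have t3 : 4 * ((x:ℝ) * Real.log 4) ≤ 4 * Real.log 4 * sM := by nlinarith
  calc _ ≤ ω * (2 * Real.log (M:ℝ)) + (((y:ℝ) + 1) * Real.log (M:ℝ) + 4 * ((x:ℝ) * Real.log 4)) :=
        add_le_add hQ hP
    _ ≤ 8 * ω * sM + (8 * sM + 4 * Real.log 4 * sM) := by linarith
    _ = (8 * ω + 8 + 4 * Real.log 4) * sM := by ring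

theorem log_lcm_eq_sum_log_primes_bigO (l m : ℕ) (hlm : m < l)
    (a₁ a₂ b₁ b₂ : ℕ) (ha₁ : 0 < a₁) (ha₂ : 0 < a₂) (hb₁ : 0 < b₁) (hb₂ : 0 < b₂)
    (hcop₁ : Nat.gcd a₁ b₁ = 1) (hcop₂ : Nat.gcd a₂ b₂ = 1) (hne : a₁ * b₂ ≠ a₂ * b₁)
    (q : ℕ) (hq : q = Nat.lcm a₁ a₂) :
    (fun n : ℕ =>
        Real.log (Lfn l m a₁ a₂ b₁ b₂ n)
          - ∑ᶠ p ∈ Pfact l m a₁ a₂ b₁ b₂ q n, Real.log p)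
      =O[atTop] (fun n : ℕ => Real.sqrt n) := by
  set D : ℕ := Nat.lcm (Int.natAbs ((a₁:ℤ)*b₂ - (a₂:ℤ)*b₁)) q with hDdef
  have hΔ : Int.natAbs ((a₁:ℤ)*b₂ - (a₂:ℤ)*b₁) ≠ 0 := by
    rw [Int.natAbs_ne_zero]
    intro h
    exact hne (by exact_mod_cast sub_eq_zero.mp h)
  have hq0 : q ≠ 0 := by
    rw [hq]; exact Nat.lcm_ne_zero ha₁.ne' ha₂.ne'
  have hD : D ≠ 0 := Nat.lcm_ne_zero hΔ hq0
  have hDdvd : Int.natAbs ((a₁:ℤ)*b₂ - (a₂:ℤ)*b₁) ∣ D := Nat.dvd_lcm_left _ _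
  have hsum : ∀ n, (∑ᶠ p ∈ Pfact l m a₁ a₂ b₁ b₂ q n, Real.log p)
      = ∑ p ∈ (Lfn l m a₁ a₂ b₁ b₂ n).primeFactors.filter (fun p => ¬ p ∣ D), Real.log p := by
    intro n
    have hset : Pfact l m a₁ a₂ b₁ b₂ q n
        = ↑((Lfn l m a₁ a₂ b₁ b₂ n).primeFactors.filter (fun p => ¬ p ∣ D)) := by
      ext p
      simp only [Pfact, Set.mem_setOf_eq, Finset.coe_filter, Finset.mem_coe,
        Nat.mem_primeFactors]
      constructor
      · rintro ⟨h1, h2, h3⟩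
        exact ⟨⟨h1, h2, Lfn_ne_zero hb₁ hb₂⟩, h3⟩
      · rintro ⟨⟨h1, h2, _⟩, h3⟩
        exact ⟨h1, h2, h3⟩
    rw [hset, finsum_mem_coe_finset]
  rw [isBigO_iff]
  refine ⟨(8 * (D.primeFactors.card : ℝ) + 8 + 4 * Real.log 4)
      * Real.sqrt ((((a₁+a₂)*l + (b₁+b₂) : ℕ)) : ℝ), ?_⟩
  filter_upwards [eventually_ge_atTop 1] with n hn
  rw [hsum n]
  have h2 := diff_nonneg' (l:=l) (m:=m) (n:=n) (a₁:=a₁) (a₂:=a₂) (D:=D) hb₁ hb₂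
  have h1 := diff_le_sqrt (l:=l) (m:=m) (n:=n) hb₁ hb₂ hDdvd hD
  rw [Real.norm_eq_abs, abs_of_nonneg h2, Real.norm_eq_abs,
    abs_of_nonneg (Real.sqrt_nonneg _)]
  refine h1.trans ?_
  conv_rhs => rw [mul_assoc]
  have hC : (0:ℝ) ≤ 8 * (D.primeFactors.card : ℝ) + 8 + 4 * Real.log 4 := by
    have : (0:ℝ) ≤ Real.log 4 := Real.log_nonneg (by norm_num)
    positivity
  apply mul_le_mul_of_nonneg_left _ hC
  have hnle : ((a₁+a₂)*l*n + (b₁+b₂) : ℕ) ≤ ((a₁+a₂)*l + (b₁+b₂)) * n := by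
    have : (b₁+b₂) ≤ (b₁+b₂) * n := Nat.le_mul_of_pos_right _ (by omega)
    calc (a₁+a₂)*l*n + (b₁+b₂) ≤ (a₁+a₂)*l*n + (b₁+b₂)*n := by omega
      _ = ((a₁+a₂)*l + (b₁+b₂)) * n := by ring
  calc Real.sqrt ((((a₁+a₂)*l*n + (b₁+b₂) : ℕ)) : ℝ)
      ≤ Real.sqrt (((((a₁+a₂)*l + (b₁+b₂)) * n : ℕ)) : ℝ) :=
        Real.sqrt_le_sqrt (by exact_mod_cast hnle)
    _ = Real.sqrt ((((a₁+a₂)*l + (b₁+b₂) : ℕ)) : ℝ) * Real.sqrt n := by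
        push_cast
        rw [Real.sqrt_mul (by positivity)]
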